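/- Under the hypotheses of Darboux's transformation theorem — p, q, r, s, y₀, y : ℝ → ℂ sufficiently differentiable, s nonvanishing with s² = r, y₀ nonvanishing with y₀'' + p·y₀' + q·y₀ = 0, and y'' + p·y' + (q − m·r)·y = 0 for a constant m ∈ ℂ — set θ₀ = y₀'/y₀, ρ = −θ₀ − p − r'/(2r), and ỹ = (1/s)·(y' − θ₀·y). Then ỹ' − ρ·ỹ = m·s·y. -/

import Mathlib

/-- First-order link between a solution and its Darboux transform:
ỹ' − ρ·ỹ = m·√r·y (Remark after Proposition 1). -/
theorem darboux_first_order_link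
    (p q r s y₀ y θ₀ ρ yt : ℝ → ℂ) (m : ℂ)
    (hp : Differentiable ℝ p) (hq : Differentiable ℝ q)
    (hr : Differentiable ℝ r) (hr' : Differentiable ℝ (deriv r))
    (hy₀ : Differentiable ℝ y₀) (hy₀' : Differentiable ℝ (deriv y₀))
    (hy : Differentiable ℝ y) (hy' : Differentiable ℝ (deriv y))
    (hs : Differentiable ℝ s)
    (hs0 : ∀ x, s x ≠ 0) (hsr : ∀ x, (s x) ^ 2 = r x)
    (hy₀0 : ∀ x, y₀ x ≠ 0)
    (hode0 : ∀ x, deriv (deriv y₀) x + p x * deriv y₀ x + q x * y₀ x = 0)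
    (hodem : ∀ x, deriv (deriv y) x + p x * deriv y x + (q x - m * r x) * y x = 0)
    (hθ₀ : ∀ x, θ₀ x = deriv y₀ x / y₀ x)
    (hρ : ∀ x, ρ x = -θ₀ x - p x - deriv r x / (2 * r x))
    (hyt : ∀ x, yt x = (1 / s x) * (deriv y x - θ₀ x * y x)) :
    ∀ x, deriv yt x - ρ x * yt x = m * s x * y x := by
  intro x
  have hθ₀f : θ₀ = fun x => deriv y₀ x / y₀ x := funext hθ₀
  have hytf : yt = fun x => (deriv y x - θ₀ x * y x) / s x := by
    funext x; rw [hyt]; ring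
  have hdy₀ : HasDerivAt y₀ (deriv y₀ x) x := (hy₀ x).hasDerivAt
  have hdy₀' : HasDerivAt (deriv y₀) (deriv (deriv y₀) x) x := (hy₀' x).hasDerivAt
  have hdy : HasDerivAt y (deriv y x) x := (hy x).hasDerivAt
  have hdy' : HasDerivAt (deriv y) (deriv (deriv y) x) x := (hy' x).hasDerivAt
  have hds : HasDerivAt s (deriv s x) x := (hs x).hasDerivAt
  -- derivative of θ₀
  have hθ₀d : HasDerivAt θ₀
      ((deriv (deriv y₀) x * y₀ x - deriv y₀ x * deriv y₀ x) / (y₀ x) ^ 2) x := by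
    rw [hθ₀f]; exact hdy₀'.div hdy₀ (hy₀0 x)
  -- derivative of r
  have hrd : HasDerivAt r (2 * s x * deriv s x) x := by
    have hrf : r = fun x => s x * s x := funext fun x => by rw [← hsr x]; ring
    rw [hrf]
    have h := hds.mul hds
    exact h.congr_deriv (by ring)
  have hrd' : deriv r x = 2 * s x * deriv s x := hrd.deriv
  -- derivative of numerator
  set θ₀' := (deriv (deriv y₀) x * y₀ x - deriv y₀ x * deriv y₀ x) / (y₀ x) ^ 2 with hθ₀'
  have hN : HasDerivAt (fun x => deriv y x - θ₀ x * y x)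
      (deriv (deriv y) x - (θ₀' * y x + θ₀ x * deriv y x)) x :=
    hdy'.sub (hθ₀d.mul hdy)
  have hytd : deriv yt x =
      ((deriv (deriv y) x - (θ₀' * y x + θ₀ x * deriv y x)) * s x
        - (deriv y x - θ₀ x * y x) * deriv s x) / s x ^ 2 := by
    rw [hytf]; exact (hN.div hds (hs0 x)).deriv
  -- ODE substitutions
  have hy₀'' : deriv (deriv y₀) x = -(p x * deriv y₀ x) - q x * y₀ x := by
    have := hode0 x; linear_combination this
  have hy'' : deriv (deriv y) x = -(p x * deriv y x) - (q x - m * r x) * y x := by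
    have := hodem x; linear_combination this
  have hrx : r x = s x ^ 2 := (hsr x).symm
  have hsne : s x ≠ 0 := hs0 x
  have hy₀ne : y₀ x ≠ 0 := hy₀0 x
  rw [hytd, hρ x, hyt x, hθ₀', hy₀'', hy'', hrd', hθ₀ x, hrx]
  field_simp [hsne, hy₀ne]
  ring
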